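/- Let X₁,…,Xₙ be Banach spaces with the separable complementation property, let Y be an arbitrary Banach space, and let C be the closed unit ball of the space of weakly sequentially continuous continuous n-linear operators from X₁ × ⋯ × Xₙ to Y. Then C is closed in the topology of pointwise (norm) convergence on L(X₁,…,Xₙ;Y) if and only if C is sequentially closed in that topology, i.e. if and only if every A ∈ L(X₁,…,Xₙ;Y) that is the pointwise limit of a sequence from C belongs to C. -/

import Mathlib

open Filter Topology

/-- A sequence `x` in a normed space converges weakly to `x₀`. -/
def WeakSeqConv (𝕜 : Type*) [RCLike 𝕜] {Z : Type*} [NormedAddCommGroup Z] [NormedSpace 𝕜 Z]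
    (x : ℕ → Z) (x₀ : Z) : Prop :=
  ∀ φ : Z →L[𝕜] 𝕜, Filter.Tendsto (fun k => φ (x k)) Filter.atTop (nhds (φ x₀))

/-- The separable complementation property: every separable closed subspace is contained in a
separable closed subspace onto which there is a continuous linear projection. -/
def SepComplProp (𝕜 : Type*) [RCLike 𝕜] (Z : Type*) [NormedAddCommGroup Z]
    [NormedSpace 𝕜 Z] : Prop :=
  ∀ S : Submodule 𝕜 Z, IsClosed (S : Set Z) → TopologicalSpace.IsSeparable (S : Set Z) →
    ∃ W : Submodule 𝕜 Z, IsClosed (W : Set Z) ∧ TopologicalSpace.IsSeparable (W : Set Z) ∧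
      S ≤ W ∧ ∃ π : Z →L[𝕜] Z, (∀ x, π x ∈ W) ∧ (∀ w ∈ W, π w = w)

variable {𝕜 : Type*} [RCLike 𝕜] {n : ℕ} {X : Fin n → Type*}
  [∀ i, NormedAddCommGroup (X i)] [∀ i, NormedSpace 𝕜 (X i)]
  {Y : Type*} [NormedAddCommGroup Y] [NormedSpace 𝕜 Y]

/-- A continuous multilinear operator is weakly sequentially continuous. -/
def MLWeaklySeqContinuous (A : ContinuousMultilinearMap 𝕜 X Y) : Prop :=
  ∀ (x : ∀ i, ℕ → X i) (x₀ : ∀ i, X i), (∀ i, WeakSeqConv 𝕜 (x i) (x₀ i)) →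
    Filter.Tendsto (fun k => A (fun i => x i k)) Filter.atTop (nhds (A x₀))

/-- weak sequential convergence is preserved by continuous linear maps -/
lemma WeakSeqConv.clm_comp {Z : Type*} [NormedAddCommGroup Z] [NormedSpace 𝕜 Z]
    {x : ℕ → Z} {x₀ : Z} (h : WeakSeqConv 𝕜 x x₀) (π : Z →L[𝕜] Z) :
    WeakSeqConv 𝕜 (fun k => π (x k)) (π x₀) := fun φ => h (φ.comp π)

/-- equi-Lipschitz estimate for norm-≤1 multilinear maps -/
lemma ml_lip (f : ContinuousMultilinearMap 𝕜 X Y) (hf : ‖f‖ ≤ 1) (w d : ∀ i, X i)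
    {R δ : ℝ} (hR : ‖w‖ ≤ R) (hd : ‖d‖ ≤ R) (hR0 : 0 ≤ R) (hδ : ‖w - d‖ ≤ δ) :
    ‖f w - f d‖ ≤ (n : ℝ) * R ^ (n - 1) * δ := by
  calc ‖f w - f d‖ ≤ ‖f‖ * (Fintype.card (Fin n)) * max ‖w‖ ‖d‖ ^ (Fintype.card (Fin n) - 1)
        * ‖w - d‖ := f.norm_image_sub_le w d
    _ ≤ 1 * (n : ℝ) * R ^ (n - 1) * δ := by
        rw [Fintype.card_fin]; gcongr; exact max_le hR hd
    _ = (n : ℝ) * R ^ (n - 1) * δ := by ring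


set_option maxHeartbeats 1000000 in
/-- Lemma 2.4: for `C` the closed unit ball of the weakly sequentially continuous `n`-linear
operators, closedness in the topology of pointwise convergence is equivalent to sequential
closedness in that topology. -/
theorem stmt2 [∀ i, CompleteSpace (X i)] [CompleteSpace Y]
    (hSCP : ∀ i, SepComplProp 𝕜 (X i)) :
    @IsClosed _ (TopologicalSpace.induced
        (fun A : ContinuousMultilinearMap 𝕜 X Y => (fun x => A x : (∀ i, X i) → Y))
        Pi.topologicalSpace)
      {A : ContinuousMultilinearMap 𝕜 X Y | MLWeaklySeqContinuous A ∧ ‖A‖ ≤ 1} ↔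
    (∀ A : ContinuousMultilinearMap 𝕜 X Y,
      (∃ B : ℕ → ContinuousMultilinearMap 𝕜 X Y,
        (∀ k, MLWeaklySeqContinuous (B k) ∧ ‖B k‖ ≤ 1) ∧
        ∀ x : ∀ i, X i,
          Filter.Tendsto (fun k => B k x) Filter.atTop (nhds (A x))) →
      MLWeaklySeqContinuous A ∧ ‖A‖ ≤ 1) := by
  classical
  set t : TopologicalSpace (ContinuousMultilinearMap 𝕜 X Y) := TopologicalSpace.induced
      (fun A : ContinuousMultilinearMap 𝕜 X Y => (fun x => A x : (∀ i, X i) → Y))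
      Pi.topologicalSpace with ht
  have hnhds : ∀ A : ContinuousMultilinearMap 𝕜 X Y, @nhds _ t A =
      Filter.comap (fun A : ContinuousMultilinearMap 𝕜 X Y => (fun x => A x : (∀ i, X i) → Y))
        (nhds (fun x => A x)) := fun A => nhds_induced _ _
  constructor
  · -- closed → sequentially closed
    intro hC A ⟨B, hB, hBt⟩
    rw [@isClosed_iff_nhds _ t] at hC
    refine hC A fun U hU => ?_
    rw [hnhds, Filter.mem_comap] at hU
    obtain ⟨V, hV, hVU⟩ := hU
    have htend : Filter.Tendsto (fun k => (fun x => B k x : (∀ i, X i) → Y)) Filter.atTop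
        (nhds (fun x => A x)) := tendsto_pi_nhds.2 hBt
    obtain ⟨k, hk⟩ := (htend.eventually_mem hV).exists
    exact ⟨B k, hVU hk, hB k⟩
  · -- sequentially closed → closed
    intro hseq
    rw [@isClosed_iff_nhds _ t]
    intro A hA
    -- key approximation property
    have hA' : ∀ (F : Finset (∀ i, X i)) (ε : ℝ), 0 < ε →
        ∃ B : ContinuousMultilinearMap 𝕜 X Y, (MLWeaklySeqContinuous B ∧ ‖B‖ ≤ 1) ∧
          ∀ m ∈ F, ‖B m - A m‖ < ε := by
      intro F ε hε
      have hU : {B : ContinuousMultilinearMap 𝕜 X Y | ∀ m ∈ F, ‖B m - A m‖ < ε} ∈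
          @nhds _ t A := by
        rw [ht, nhds_induced]
        refine Filter.mem_comap.2 ⟨Set.pi (↑F) (fun m => Metric.ball (A m) ε), ?_, ?_⟩
        · exact set_pi_mem_nhds F.finite_toSet (fun m _ => Metric.ball_mem_nhds _ hε)
        · intro B hB m hm
          simpa [dist_eq_norm] using hB m hm
      obtain ⟨B, hB1, hB2⟩ := hA _ hU
      exact ⟨B, hB2, hB1⟩
    -- norm bound
    have hnorm : ‖A‖ ≤ 1 := by
      refine ContinuousMultilinearMap.opNorm_le_iff zero_le_one |>.2 fun m => ?_
      rw [one_mul]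
      refine le_of_forall_pos_le_add fun ε hε => ?_
      obtain ⟨B, ⟨_, hBn⟩, hBm⟩ := hA' {m} ε hε
      have h1 : ‖B m - A m‖ < ε := hBm m (Finset.mem_singleton_self m)
      have h2 : ‖B m‖ ≤ ∏ i, ‖m i‖ := by
        calc ‖B m‖ ≤ ‖B‖ * ∏ i, ‖m i‖ := B.le_opNorm m
          _ ≤ 1 * ∏ i, ‖m i‖ := by gcongr
          _ = ∏ i, ‖m i‖ := one_mul _
      have h1' : ‖A m‖ - ‖B m‖ ≤ ‖A m - B m‖ := norm_sub_norm_le _ _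
      rw [norm_sub_rev] at h1
      linarith
    refine ⟨?_, hnorm⟩
    -- weak sequential continuity
    intro x x₀ hweak
    -- separable closed subspaces containing the data
    set S : ∀ i, Submodule 𝕜 (X i) := fun i =>
      (Submodule.span 𝕜 (Set.range (x i) ∪ {x₀ i})).topologicalClosure with hS
    have hSclosed : ∀ i, IsClosed ((S i : Set (X i))) := fun i =>
      Submodule.isClosed_topologicalClosure _
    have hSsep : ∀ i, TopologicalSpace.IsSeparable ((S i : Set (X i))) := by
      intro i
      have hc : (Set.range (x i) ∪ {x₀ i}).Countable :=
        (Set.countable_range _).union (Set.countable_singleton _)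
      have := hc.isSeparable.span (R := 𝕜)
      have h2 := this.closure
      rwa [Submodule.topologicalClosure_coe]
    choose W hWclosed hWsep hSW π hπmem hπfix using fun i => hSCP i (S i) (hSclosed i) (hSsep i)
    -- countable dense sets
    have hDsep : ∀ i, ∃ c : Set (X i), c.Countable ∧ c.Nonempty ∧ (W i : Set (X i)) ⊆ closure c := by
      intro i
      obtain ⟨c, hc, hsub⟩ := hWsep i
      exact ⟨c ∪ {0}, hc.union (Set.countable_singleton _), Set.nonempty_of_mem (Set.mem_union_right _ rfl),
        hsub.trans (closure_mono Set.subset_union_left)⟩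
    choose c hccount hcne hcsub using hDsep
    set D : Set (∀ i, X i) := {f | ∀ i, f i ∈ c i} with hD
    have hDcount : D.Countable := Set.countable_pi hccount
    have hDne : D.Nonempty := ⟨fun i => (hcne i).choose, fun i => (hcne i).choose_spec⟩
    obtain ⟨e, he⟩ := hDcount.exists_eq_range hDne
    -- construct the approximating sequence
    have hBex : ∀ m : ℕ, ∃ B : ContinuousMultilinearMap 𝕜 X Y,
        (MLWeaklySeqContinuous B ∧ ‖B‖ ≤ 1) ∧
        ∀ j ≤ m, ‖B (e j) - A (e j)‖ < 1 / (m + 1) := by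
      intro m
      obtain ⟨B, hB1, hB2⟩ := hA' ((Finset.range (m + 1)).image e) (1 / (m + 1))
        (by positivity)
      exact ⟨B, hB1, fun j hj => hB2 (e j)
        (Finset.mem_image_of_mem e (Finset.mem_range.2 (Nat.lt_succ_of_le hj)))⟩
    choose B hBprop hBapprox using hBex
    -- pointwise convergence on W
    have hWlim : ∀ w : ∀ i, X i, (∀ i, w i ∈ W i) →
        Filter.Tendsto (fun m => B m w) Filter.atTop (nhds (A w)) := by
      intro w hw
      rw [NormedAddCommGroup.tendsto_atTop]
      intro ε hε
      set R : ℝ := ‖w‖ + 1 with hR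
      have hR0 : (0 : ℝ) ≤ R := by positivity
      set L : ℝ := (n : ℝ) * R ^ (n - 1) with hL
      have hL0 : 0 ≤ L := by positivity
      set δ : ℝ := min 1 (ε / (3 * (L + 1))) with hδ
      have hδ0 : 0 < δ := by
        apply lt_min one_pos; positivity
      -- choose a close point of D
      have hd : ∀ i, ∃ d ∈ c i, ‖w i - d‖ < δ := by
        intro i
        have : w i ∈ closure (c i) := hcsub i (hw i)
        obtain ⟨d, hd1, hd2⟩ := Metric.mem_closure_iff.1 this δ hδ0
        exact ⟨d, hd1, by rwa [← dist_eq_norm]⟩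
      choose d hdmem hdclose using hd
      have hdD : d ∈ D := hdmem
      have hwd : ‖w - d‖ < δ := by
        rcases Nat.eq_zero_or_pos n with hn | hn
        · have : w - d = 0 := by
            funext i; exact absurd i.2 (by omega)
          rw [this, norm_zero]; exact hδ0
        · exact (pi_norm_lt_iff hδ0).2 fun i => hdclose i
      have hdnorm : ‖d‖ ≤ R := by
        have h := norm_sub_norm_le d w
        rw [norm_sub_rev] at h
        have h2 : δ ≤ 1 := min_le_left _ _
        have h3 := hwd.le.trans h2
        rw [hR]; linarith
      have hwnorm : ‖w‖ ≤ R := by rw [hR]; linarith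
      -- lipschitz bounds
      have hlip : ∀ f : ContinuousMultilinearMap 𝕜 X Y, ‖f‖ ≤ 1 → ‖f w - f d‖ < ε / 3 := by
        intro f hf
        have h1 : ‖f w - f d‖ ≤ L * δ := ml_lip f hf w d hwnorm hdnorm hR0 hwd.le
        have h2 : L * δ < ε / 3 := by
          have hδ2 : δ ≤ ε / (3 * (L + 1)) := min_le_right _ _
          have : L * δ ≤ L * (ε / (3 * (L + 1))) := by
            apply mul_le_mul_of_nonneg_left hδ2 hL0
          have hlt : L * (ε / (3 * (L + 1))) < ε / 3 := by
            have h3 : (0:ℝ) < 3 * (L + 1) := by positivity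
            rw [show L * (ε / (3 * (L + 1))) = (L * ε) / (3 * (L + 1)) from by ring,
              div_lt_iff₀ h3]
            nlinarith [hL0, hε]
          linarith
        linarith
      -- index of d and tail index
      obtain ⟨j, hj⟩ : ∃ j, e j = d := by
        have : d ∈ Set.range e := he ▸ hdD
        exact this
      obtain ⟨N₀, hN₀⟩ := exists_nat_one_div_lt (show (0:ℝ) < ε / 3 by linarith)
      refine ⟨max j N₀, fun m hm => ?_⟩
      have hjm : j ≤ m := le_trans (le_max_left _ _) hm
      have hmid : ‖B m d - A d‖ < ε / 3 := by
        have h1 := hBapprox m j hjm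
        rw [hj] at h1
        have h2 : (1 : ℝ) / (m + 1) ≤ 1 / (N₀ + 1) := by
          apply one_div_le_one_div_of_le (by positivity)
          have : (N₀ : ℝ) ≤ m := by
            exact_mod_cast le_trans (le_max_right j N₀) hm
          linarith
        linarith
      calc ‖B m w - A w‖ = ‖(B m w - B m d) + (B m d - A d) + (A d - A w)‖ := by abel_nf
        _ ≤ ‖B m w - B m d‖ + ‖B m d - A d‖ + ‖A d - A w‖ := norm_add₃_le
        _ < ε / 3 + ε / 3 + ε / 3 := by
            have h1 := hlip (B m) (hBprop m).2
            have h2 : ‖A d - A w‖ < ε / 3 := by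
              rw [← norm_neg]; simpa using hlip A hnorm
            gcongr
        _ = ε := by ring
    -- the scaled composed operators
    set cr : ℝ := (∏ i, ‖π i‖ + 1)⁻¹ with hcr
    have hprod0 : (0:ℝ) ≤ ∏ i, ‖π i‖ := Finset.prod_nonneg fun i _ => norm_nonneg _
    have hcr0 : 0 < cr := by rw [hcr]; positivity
    set A' : ContinuousMultilinearMap 𝕜 X Y := (cr : 𝕜) • A.compContinuousLinearMap π with hA'def
    have hA'apply : ∀ z : ∀ i, X i, A' z = (cr : 𝕜) • A (fun i => π i (z i)) := fun z => rfl
    have hB'apply : ∀ (m : ℕ) (z : ∀ i, X i),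
        ((cr : 𝕜) • (B m).compContinuousLinearMap π) z
          = (cr : 𝕜) • B m (fun i => π i (z i)) := fun m z => rfl
    have key : MLWeaklySeqContinuous A' := by
      refine (hseq A' ⟨fun m => (cr : 𝕜) • (B m).compContinuousLinearMap π, fun m => ⟨?_, ?_⟩, ?_⟩).1
      · -- wsc
        intro y y₀ hy
        have h := (hBprop m).1 (fun i k => π i (y i k)) (fun i => π i (y₀ i))
          (fun i => (hy i).clm_comp (π i))
        simp only [hB'apply]
        exact h.const_smul ((cr : 𝕜))
      · -- norm
        calc ‖(cr : 𝕜) • (B m).compContinuousLinearMap π‖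
            ≤ ‖(cr : 𝕜)‖ * ‖(B m).compContinuousLinearMap π‖ := ContinuousMultilinearMap.opNorm_smul_le _ _
          _ ≤ cr * (1 * ∏ i, ‖π i‖) := by
              rw [RCLike.norm_ofReal, abs_of_pos hcr0]
              gcongr
              calc ‖(B m).compContinuousLinearMap π‖ ≤ ‖B m‖ * ∏ i, ‖π i‖ :=
                    ContinuousMultilinearMap.norm_compContinuousLinearMap_le _ _
                _ ≤ 1 * ∏ i, ‖π i‖ := by gcongr; exact (hBprop m).2
          _ ≤ 1 := by
              rw [one_mul, hcr]
              rw [inv_mul_le_iff₀ (by positivity), mul_one]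
              linarith
      · -- pointwise convergence to A'
        intro z
        have h := hWlim (fun i => π i (z i)) (fun i => hπmem i (z i))
        simp only [hB'apply, hA'apply]
        exact h.const_smul ((cr : 𝕜))
    -- apply to the given weakly convergent sequences
    have hfix : ∀ i k, π i (x i k) = x i k := by
      intro i k
      apply hπfix
      apply hSW
      apply Submodule.le_topologicalClosure
      exact Submodule.subset_span (Set.mem_union_left _ ⟨k, rfl⟩)
    have hfix₀ : ∀ i, π i (x₀ i) = x₀ i := by
      intro i
      apply hπfix
      apply hSW
      apply Submodule.le_topologicalClosure
      exact Submodule.subset_span (Set.mem_union_right _ rfl)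
    have h1 := key x x₀ hweak
    have h2 : ∀ k, A' (fun i => x i k) = (cr : 𝕜) • A (fun i => x i k) := by
      intro k
      rw [hA'apply]
      congr 2
      funext i; exact hfix i k
    have h3 : A' x₀ = (cr : 𝕜) • A x₀ := by
      rw [hA'apply]
      congr 2
      funext i; exact hfix₀ i
    simp only [h2, h3] at h1
    have hcrne : (cr : 𝕜) ≠ 0 := by
      simp only [ne_eq, RCLike.ofReal_eq_zero]
      exact hcr0.ne'
    have h4 := h1.const_smul ((cr : 𝕜)⁻¹)
    simpa [smul_smul, inv_mul_cancel₀ hcrne] using h4
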